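/- arXiv:2102.00102 — 3 statements merged into one kernel-verified Lean document; each statement's English description precedes it below -/
import Mathlib

section
/- Let $\bar{Q}, \bar{Q}_0 : \mathcal{A} \times \mathcal{C} \to [0,1]$ be conditional mean functions, $g, g^*$ conditional densities of $A$ given $C$ with $g \ge \delta > 0$, and define $D^*(\bar{Q}, g)(c, a, y) = \frac{g^*(a \mid c)}{g(a \mid c)}(y - \bar{Q}(a, c))$ and $\Psi_c(\bar{Q}) = \sum_a g^*(a \mid c)\bar{Q}(a, c)$. If $Y$ is drawn with conditional mean $\bar{Q}_0(A, c)$ given $(A, c)$ where $A \sim g(\cdot \mid c)$, then $\Psi_c(\bar{Q}) - \Psi_c(\bar{Q}_0) = -E[D^*(\bar{Q}, g)(c, A, Y)] + R(\bar{Q}, \bar{Q}_0, g, g_0)$ where $R(\bar{Q}, \bar{Q}_0, g, g_0) = \sum_a g^*(a \mid c)\left(1 - \frac{g_0(a \mid c)}{g(a \mid c)}\right)(\bar{Q} - \bar{Q}_0)(a, c)$, and $R = 0$ whenever $\bar{Q} = \bar{Q}_0$ or $g = g_0$. -/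
open MeasureTheory

/-- Theorem 1: first-order expansion of the context-specific parameter
`Ψ_c(Q̄) = ∑_a g*(a∣c) Q̄(a,c)` with the doubly robust second-order remainder
`R(Q̄,Q̄₀,g,g₀) = ∑_a g*(a∣c)(1 - g₀(a∣c)/g(a∣c))(Q̄ - Q̄₀)(a,c)`, where the expectation is
over `A ~ g₀(⋅∣c)` and `Y` with conditional mean `Q̄₀(A,c)`. -/
theorem stmt_3 {C : Type*} {Ω : Type*} [MeasurableSpace Ω]
    (μ : Measure Ω) [IsProbabilityMeasure μ]
    (Qbar Qbar0 : Bool → C → ℝ) (g g0 gstar : Bool → C → ℝ)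
    (δ : ℝ) (hδ : 0 < δ) (hg : ∀ a x, δ ≤ g a x)
    (c : C) (A : Ω → Bool) (Y : Ω → ℝ)
    (hA : Measurable A) (hY : Integrable Y μ)
    (hmarg : ∀ a, (μ {ω | A ω = a}).toReal = g0 a c)
    (hcond : ∀ a : Bool, ∫ ω in {ω | A ω = a}, Y ω ∂μ = g0 a c * Qbar0 a c) :
    ((∑ a : Bool, gstar a c * Qbar a c) - (∑ a : Bool, gstar a c * Qbar0 a c)
      = -(∫ ω, gstar (A ω) c / g (A ω) c * (Y ω - Qbar (A ω) c) ∂μ)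
        + ∑ a : Bool, gstar a c * (1 - g0 a c / g a c) * (Qbar a c - Qbar0 a c)) ∧
    ((Qbar = Qbar0 ∨ g = g0) →
      (∑ a : Bool, gstar a c * (1 - g0 a c / g a c) * (Qbar a c - Qbar0 a c)) = 0) := by
  have hgne : ∀ a, g a c ≠ 0 := fun a => ne_of_gt (lt_of_lt_of_le hδ (hg a c))
  set k : Bool → ℝ := fun a => gstar a c / g a c with hk
  -- measurability of Bool-valued composition
  have hmeasA : ∀ f : Bool → ℝ, Measurable (fun ω => f (A ω)) :=
    fun f => (measurable_from_top (f := f)).comp hA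
  have hbdd : ∀ f : Bool → ℝ, ∃ M, ∀ ω, ‖f (A ω)‖ ≤ M := by
    intro f
    refine ⟨max ‖f true‖ ‖f false‖, fun ω => ?_⟩
    cases h : A ω <;> simp [h, le_max_left, le_max_right]
  have hIntKA : ∀ f : Bool → ℝ, Integrable (fun ω => f (A ω)) μ := by
    intro f
    obtain ⟨M, hM⟩ := hbdd f
    exact (integrable_const M).mono ((hmeasA f).aestronglyMeasurable)
      (Filter.Eventually.of_forall (fun ω => (hM ω).trans (le_abs_self M)))
  have hIntKY : Integrable (fun ω => k (A ω) * Y ω) μ := by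
    obtain ⟨M, hM⟩ := hbdd k
    exact hY.bdd_mul ((hmeasA k).aestronglyMeasurable) (Filter.Eventually.of_forall hM)
  have hInt : Integrable (fun ω => k (A ω) * (Y ω - Qbar (A ω) c)) μ := by
    have : (fun ω => k (A ω) * (Y ω - Qbar (A ω) c))
        = fun ω => k (A ω) * Y ω - (fun a => k a * Qbar a c) (A ω) := by
      funext ω; ring
    rw [this]
    exact hIntKY.sub (hIntKA fun a => k a * Qbar a c)
  have hmeasS : ∀ a, MeasurableSet {ω | A ω = a} :=
    fun a => hA (measurableSet_singleton a)
  have hset : ∀ a : Bool, ∫ ω in {ω | A ω = a}, k (A ω) * (Y ω - Qbar (A ω) c) ∂μ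
      = k a * (g0 a c * Qbar0 a c - g0 a c * Qbar a c) := by
    intro a
    have h1 : ∫ ω in {ω | A ω = a}, k (A ω) * (Y ω - Qbar (A ω) c) ∂μ
        = ∫ ω in {ω | A ω = a}, k a * (Y ω - Qbar a c) ∂μ := by
      refine setIntegral_congr_fun (hmeasS a) (fun ω hω => ?_)
      simp only [Set.mem_setOf_eq] at hω
      rw [hω]
    rw [h1]
    have h2 : ∫ ω in {ω | A ω = a}, k a * (Y ω - Qbar a c) ∂μ
        = k a * ∫ ω in {ω | A ω = a}, (Y ω - Qbar a c) ∂μ := by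
      rw [integral_const_mul]
    rw [h2]
    have hYint : IntegrableOn Y {ω | A ω = a} μ := hY.integrableOn
    rw [integral_sub hYint (integrableOn_const (measure_lt_top _ _).ne),
      hcond a, setIntegral_const, measureReal_def, hmarg a, smul_eq_mul]
  have hcompl : {ω | A ω = false} = {ω | A ω = true}ᶜ := by
    ext ω; simp
  have htotal : ∫ ω, k (A ω) * (Y ω - Qbar (A ω) c) ∂μ
      = k true * (g0 true c * Qbar0 true c - g0 true c * Qbar true c)
        + k false * (g0 false c * Qbar0 false c - g0 false c * Qbar false c) := by
    rw [← hset true, ← hset false, hcompl]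
    exact (integral_add_compl (hmeasS true) hInt).symm
  constructor
  · have : (∫ ω, gstar (A ω) c / g (A ω) c * (Y ω - Qbar (A ω) c) ∂μ)
        = ∫ ω, k (A ω) * (Y ω - Qbar (A ω) c) ∂μ := rfl
    rw [this, htotal, hk]
    simp only [Fintype.sum_bool]
    field_simp
    ring
  · rintro (h | h) <;> subst h <;> simp [hgne, Fintype.sum_bool, div_self]
end

section
/- With $\Lambda_t, \Upsilon_t$ defined from a bracket $(\lambda, \upsilon)$ as in the previous statement, with $g_{0,t} \ge \delta$, $g^* \le 1$: (i) $|\Upsilon_t - \Lambda_t| \le 2\delta^{-1}$ pointwise, and (ii) $\frac{1}{N}\sum_{t=1}^N E[(\Upsilon_t - \Lambda_t)^2 \mid \bar{O}(t-1)] \le 4\delta^{-1}\|\upsilon - \lambda\|^2_{2, P_{g^*, h_N}}$, where $\|f\|^2_{2, P_{g^*, h_N}} = \frac{1}{N}\sum_{t=1}^N \sum_{a} g^*(a \mid C_o(t)) f(a, C_o(t))^2$. In particular, an $\epsilon$-bracketing of $\bar{\mathcal{Q}}$ in $L_2(P_{g^*, h_N})$ yields a $(2\delta^{-1/2}\epsilon,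 2\delta^{-1}, \bar{O}(N))$ sequential bracketing of the process $\Xi_N$, hence $\mathcal{N}_{[\,]}(2\delta^{-1/2}\epsilon, 2\delta^{-1}, \Xi_N, \bar{O}(N)) \le N_{[\,]}(\epsilon, \bar{\mathcal{Q}}, L_2(P_{g^*, h_N}))$. -/
/-- The gap `Υ_t - Λ_t` of the sequential bracket constructed from an outcome-model bracket
`(λ, υ)`, evaluated at treatment `a` and the realized context `Ctx t`:
`(g*/g_{0,t})(υ - λ)(a, C_o(t)) + ∑_{a'} g*(a'∣C_o(t)) (υ - λ)(a', C_o(t))`. -/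
noncomputable def bracketGap {C : Type*} (Ctx : ℕ → C) (lam ups : Bool → C → ℝ)
    (gstar : Bool → C → ℝ) (g0 : ℕ → Bool → C → ℝ) (t : ℕ) (a : Bool) : ℝ :=
  gstar a (Ctx t) / g0 t a (Ctx t) * (ups a (Ctx t) - lam a (Ctx t))
    + ∑ a' : Bool, gstar a' (Ctx t) * (ups a' (Ctx t) - lam a' (Ctx t))


private lemma expand_aux (p q s : ℝ) (hp : 0 ≤ p) :
    p * (q + s)^2 ≤ 2 * (p * q^2) + 2 * (p * s^2) := by
  nlinarith [mul_nonneg hp (sq_nonneg (q - s))]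

private lemma cs_aux (gT gF dT dF : ℝ) (hT : 0 ≤ gT) (hF : 0 ≤ gF) (hs : gT + gF = 1) :
    (gT * dT + gF * dF)^2 ≤ gT * dT^2 + gF * dF^2 := by
  nlinarith [mul_nonneg (mul_nonneg hT hF) (sq_nonneg (dT - dF))]

private lemma combine_aux (δi gT gF pT pF dT dF qT qF S : ℝ)
    (hqT2 : pT * qT^2 ≤ δi * (gT * dT^2)) (hqF2 : pF * qF^2 ≤ δi * (gF * dF^2))
    (hCS : S^2 ≤ gT * dT^2 + gF * dF^2) (hsump : pT + pF = 1)
    (hT0 : 0 ≤ gT * dT^2 + gF * dF^2) (hδinv : 1 ≤ δi)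
    (hpT : 0 ≤ pT) (hpF : 0 ≤ pF) :
    pT * (qT + S)^2 + pF * (qF + S)^2 ≤ 4 * δi * (gT * dT^2 + gF * dF^2) := by
  have e1 := expand_aux pT qT S hpT
  have e2 := expand_aux pF qF S hpF
  have hSsq : pT * S^2 + pF * S^2 = S^2 := by rw [← add_mul, hsump, one_mul]
  have h5 : gT * dT^2 + gF * dF^2 ≤ δi * (gT * dT^2 + gF * dF^2) :=
    le_mul_of_one_le_left hT0 hδinv
  nlinarith [e1, e2, hSsq, h5, hCS, hqT2, hqF2]

/-- Lemma 3, size of the sequential brackets: with `g_{0,t} ≥ δ`,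
`g* ≤ 1` conditional densities and `0 ≤ λ ≤ υ ≤ 1`:
(i) `|Υ_t - Λ_t| ≤ 2δ⁻¹` pointwise, and
(ii) the average of the conditional second moments
`(1/N)∑_t E[(Υ_t - Λ_t)² ∣ Ō(t-1)] = (1/N)∑_t ∑_a g_{0,t}(a∣C_o(t)) (Υ_t-Λ_t)²(a)`
is at most `4 δ⁻¹ ‖υ - λ‖²_{2,P_{g*,h_N}}`; hence an `ε`-bracketing of the outcome model in
`L₂(P_{g*,h_N})` yields a `(2δ^{-1/2}ε, 2δ⁻¹)` sequential bracketing of the canonical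
gradient process `Ξ_N`. -/
theorem stmt_9 {C : Type*} (N : ℕ) (hN : 0 < N) (Ctx : ℕ → C)
    (lam ups : Bool → C → ℝ) (gstar : Bool → C → ℝ) (g0 : ℕ → Bool → C → ℝ)
    (δ : ℝ) (hδ : 0 < δ)
    (hg0 : ∀ t a c, δ ≤ g0 t a c) (hg0' : ∀ t a c, g0 t a c ≤ 1)
    (hg0sum : ∀ t c, ∑ a : Bool, g0 t a c = 1)
    (hgs0 : ∀ a c, 0 ≤ gstar a c) (hgs1 : ∀ a c, gstar a c ≤ 1)
    (hgssum : ∀ c, ∑ a : Bool, gstar a c = 1)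
    (hlo : ∀ a c, 0 ≤ lam a c) (hord : ∀ a c, lam a c ≤ ups a c)
    (hhi : ∀ a c, ups a c ≤ 1) :
    (∀ t a, |bracketGap Ctx lam ups gstar g0 t a| ≤ 2 * δ⁻¹) ∧
    ((1/(N:ℝ)) * ∑ t ∈ Finset.range N,
        ∑ a : Bool, g0 t a (Ctx t) * (bracketGap Ctx lam ups gstar g0 t a)^2
      ≤ 4 * δ⁻¹ * ((1/(N:ℝ)) * ∑ t ∈ Finset.range N,
          ∑ a : Bool, gstar a (Ctx t) * (ups a (Ctx t) - lam a (Ctx t))^2)) ∧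
    (∀ ε : ℝ, 0 ≤ ε →
      (1/(N:ℝ)) * ∑ t ∈ Finset.range N,
          ∑ a : Bool, gstar a (Ctx t) * (ups a (Ctx t) - lam a (Ctx t))^2 ≤ ε^2 →
      (1/(N:ℝ)) * ∑ t ∈ Finset.range N,
          ∑ a : Bool, g0 t a (Ctx t) * (bracketGap Ctx lam ups gstar g0 t a)^2
        ≤ (2 * δ⁻¹ ^ ((1:ℝ)/2) * ε)^2) := by

  have hδ1 : δ ≤ 1 := le_trans (hg0 0 true (Ctx 0)) (hg0' 0 true (Ctx 0))
  have hδi : (0:ℝ) < δ⁻¹ := inv_pos.mpr hδ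
  have hδinv : (1:ℝ) ≤ δ⁻¹ := by
    rw [le_inv_comm₀ one_pos hδ]; simpa using hδ1
  -- basic facts per t
  have hd0 : ∀ a c, (0:ℝ) ≤ ups a c - lam a c := fun a c => sub_nonneg.mpr (hord a c)
  have hd1 : ∀ a c, ups a c - lam a c ≤ 1 := fun a c => by
    have := hlo a c; have := hhi a c; linarith
  have hg0pos : ∀ t a c, (0:ℝ) < g0 t a c := fun t a c => lt_of_lt_of_le hδ (hg0 t a c)
  have hq : ∀ t a, gstar a (Ctx t) / g0 t a (Ctx t) * (ups a (Ctx t) - lam a (Ctx t)) ≤ δ⁻¹ := by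
    intro t a
    have h1 : gstar a (Ctx t) / g0 t a (Ctx t) ≤ 1 / δ :=
      div_le_div₀ zero_le_one (hgs1 a (Ctx t)) hδ (hg0 t a (Ctx t))
    have h2 : gstar a (Ctx t) / g0 t a (Ctx t) * (ups a (Ctx t) - lam a (Ctx t))
        ≤ gstar a (Ctx t) / g0 t a (Ctx t) * 1 :=
      mul_le_mul_of_nonneg_left (hd1 a (Ctx t))
        (div_nonneg (hgs0 a (Ctx t)) (hg0pos t a (Ctx t)).le)
    calc gstar a (Ctx t) / g0 t a (Ctx t) * (ups a (Ctx t) - lam a (Ctx t))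
        ≤ gstar a (Ctx t) / g0 t a (Ctx t) * 1 := h2
      _ = gstar a (Ctx t) / g0 t a (Ctx t) := mul_one _
      _ ≤ 1 / δ := h1
      _ = δ⁻¹ := one_div δ
  have hq0 : ∀ t a, (0:ℝ) ≤ gstar a (Ctx t) / g0 t a (Ctx t) * (ups a (Ctx t) - lam a (Ctx t)) :=
    fun t a => mul_nonneg (div_nonneg (hgs0 a (Ctx t)) (hg0pos t a (Ctx t)).le) (hd0 a (Ctx t))
  have hS0 : ∀ t, (0:ℝ) ≤ ∑ a' : Bool, gstar a' (Ctx t) * (ups a' (Ctx t) - lam a' (Ctx t)) :=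
    fun t => Finset.sum_nonneg fun a' _ => mul_nonneg (hgs0 a' (Ctx t)) (hd0 a' (Ctx t))
  have hS1 : ∀ t, ∑ a' : Bool, gstar a' (Ctx t) * (ups a' (Ctx t) - lam a' (Ctx t)) ≤ 1 := by
    intro t
    calc ∑ a' : Bool, gstar a' (Ctx t) * (ups a' (Ctx t) - lam a' (Ctx t))
        ≤ ∑ a' : Bool, gstar a' (Ctx t) := by
          refine Finset.sum_le_sum fun a' _ => ?_
          calc gstar a' (Ctx t) * (ups a' (Ctx t) - lam a' (Ctx t))
              ≤ gstar a' (Ctx t) * 1 :=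
                mul_le_mul_of_nonneg_left (hd1 a' (Ctx t)) (hgs0 a' (Ctx t))
            _ = gstar a' (Ctx t) := mul_one _
      _ = 1 := hgssum (Ctx t)
  have part1 : ∀ t a, |bracketGap Ctx lam ups gstar g0 t a| ≤ 2 * δ⁻¹ := by
    intro t a
    have h0 : 0 ≤ bracketGap Ctx lam ups gstar g0 t a := add_nonneg (hq0 t a) (hS0 t)
    rw [abs_of_nonneg h0]
    have := hq t a; have := hS1 t
    unfold bracketGap; linarith
  -- pointwise second-moment bound
  have key : ∀ t, ∑ a : Bool, g0 t a (Ctx t) * (bracketGap Ctx lam ups gstar g0 t a)^2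
      ≤ 4 * δ⁻¹ * ∑ a : Bool, gstar a (Ctx t) * (ups a (Ctx t) - lam a (Ctx t))^2 := by
    intro t
    set c := Ctx t with hc
    set dT := ups true c - lam true c with hdT
    set dF := ups false c - lam false c with hdF
    set gT := gstar true c with hgT
    set gF := gstar false c with hgF
    set pT := g0 t true c with hpT
    set pF := g0 t false c with hpF
    have hpTpos : (0:ℝ) < pT := hg0pos t true c
    have hpFpos : (0:ℝ) < pF := hg0pos t false c
    set qT := gT / pT * dT with hqTd
    set qF := gF / pF * dF with hqFd
    set S := gT * dT + gF * dF with hSd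
    have hsumg : gT + gF = 1 := by
      have := hgssum c; simpa [Fintype.sum_bool, hgT, hgF] using this
    have hsump : pT + pF = 1 := by
      have := hg0sum t c; simpa [Fintype.sum_bool, hpT, hpF] using this
    have hSe : ∑ a' : Bool, gstar a' c * (ups a' c - lam a' c) = S := by
      simp [Fintype.sum_bool, hSd]; rfl
    have hgapT : bracketGap Ctx lam ups gstar g0 t true = qT + S := by
      unfold bracketGap; rw [← hc, hSe]
    have hgapF : bracketGap Ctx lam ups gstar g0 t false = qF + S := by
      unfold bracketGap; rw [← hc, hSe]
    have hqT2 : pT * qT^2 ≤ δ⁻¹ * (gT * dT^2) := by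
      have h1 : pT * qT^2 = gT / pT * (gT * dT^2) := by
        rw [hqTd]; field_simp
      rw [h1]
      apply mul_le_mul_of_nonneg_right _ (mul_nonneg (hgs0 true c) (sq_nonneg _))
      calc gT / pT ≤ 1 / δ := div_le_div₀ zero_le_one (hgs1 true c) hδ (hg0 t true c)
        _ = δ⁻¹ := one_div δ
    have hqF2 : pF * qF^2 ≤ δ⁻¹ * (gF * dF^2) := by
      have h1 : pF * qF^2 = gF / pF * (gF * dF^2) := by
        rw [hqFd]; field_simp
      rw [h1]
      apply mul_le_mul_of_nonneg_right _ (mul_nonneg (hgs0 false c) (sq_nonneg _))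
      calc gF / pF ≤ 1 / δ := div_le_div₀ zero_le_one (hgs1 false c) hδ (hg0 t false c)
        _ = δ⁻¹ := one_div δ
    have hCS : S^2 ≤ gT * dT^2 + gF * dF^2 := by
      rw [hSd]; exact cs_aux gT gF dT dF (hgs0 true c) (hgs0 false c) hsumg
    have hT0 : (0:ℝ) ≤ gT * dT^2 + gF * dF^2 :=
      add_nonneg (mul_nonneg (hgs0 true c) (sq_nonneg _))
        (mul_nonneg (hgs0 false c) (sq_nonneg _))
    rw [Fintype.sum_bool, Fintype.sum_bool, hgapT, hgapF, ← hdT, ← hdF,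
      ← hgT, ← hgF, ← hpT, ← hpF]
    clear_value qT qF S dT dF gT gF pT pF
    exact combine_aux δ⁻¹ gT gF pT pF dT dF qT qF S hqT2 hqF2 hCS hsump hT0 hδinv
      hpTpos.le hpFpos.le
  refine ⟨part1, ?_, ?_⟩
  · have hsum : ∑ t ∈ Finset.range N,
        ∑ a : Bool, g0 t a (Ctx t) * (bracketGap Ctx lam ups gstar g0 t a)^2
        ≤ ∑ t ∈ Finset.range N,
          4 * δ⁻¹ * ∑ a : Bool, gstar a (Ctx t) * (ups a (Ctx t) - lam a (Ctx t))^2 :=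
      Finset.sum_le_sum fun t _ => key t
    rw [← Finset.mul_sum] at hsum
    have hNi : (0:ℝ) ≤ 1/(N:ℝ) := by positivity
    calc (1/(N:ℝ)) * ∑ t ∈ Finset.range N,
          ∑ a : Bool, g0 t a (Ctx t) * (bracketGap Ctx lam ups gstar g0 t a)^2
        ≤ (1/(N:ℝ)) * (4 * δ⁻¹ * ∑ t ∈ Finset.range N,
            ∑ a : Bool, gstar a (Ctx t) * (ups a (Ctx t) - lam a (Ctx t))^2) :=
          mul_le_mul_of_nonneg_left hsum hNi
      _ = 4 * δ⁻¹ * ((1/(N:ℝ)) * ∑ t ∈ Finset.range N,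
            ∑ a : Bool, gstar a (Ctx t) * (ups a (Ctx t) - lam a (Ctx t))^2) := by ring
  · intro ε hε hεbd
    have hpow : (δ⁻¹ ^ ((1:ℝ)/2))^2 = δ⁻¹ := by
      rw [← Real.rpow_natCast (δ⁻¹ ^ ((1:ℝ)/2)) 2, ← Real.rpow_mul hδi.le]
      norm_num
    have h2 : (2 * δ⁻¹ ^ ((1:ℝ)/2) * ε)^2 = 4 * δ⁻¹ * ε^2 := by
      have : (2 * δ⁻¹ ^ ((1:ℝ)/2) * ε)^2 = 4 * (δ⁻¹ ^ ((1:ℝ)/2))^2 * ε^2 := by ring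
      rw [this, hpow]
    rw [h2]
    have hsum : ∑ t ∈ Finset.range N,
        ∑ a : Bool, g0 t a (Ctx t) * (bracketGap Ctx lam ups gstar g0 t a)^2
        ≤ ∑ t ∈ Finset.range N,
          4 * δ⁻¹ * ∑ a : Bool, gstar a (Ctx t) * (ups a (Ctx t) - lam a (Ctx t))^2 :=
      Finset.sum_le_sum fun t _ => key t
    rw [← Finset.mul_sum] at hsum
    have hNi : (0:ℝ) ≤ 1/(N:ℝ) := by positivity
    have h3 : (1/(N:ℝ)) * ∑ t ∈ Finset.range N,
        ∑ a : Bool, g0 t a (Ctx t) * (bracketGap Ctx lam ups gstar g0 t a)^2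
        ≤ 4 * δ⁻¹ * ((1/(N:ℝ)) * ∑ t ∈ Finset.range N,
          ∑ a : Bool, gstar a (Ctx t) * (ups a (Ctx t) - lam a (Ctx t))^2) := by
      calc (1/(N:ℝ)) * ∑ t ∈ Finset.range N,
          ∑ a : Bool, g0 t a (Ctx t) * (bracketGap Ctx lam ups gstar g0 t a)^2
          ≤ (1/(N:ℝ)) * (4 * δ⁻¹ * ∑ t ∈ Finset.range N,
              ∑ a : Bool, gstar a (Ctx t) * (ups a (Ctx t) - lam a (Ctx t))^2) :=
            mul_le_mul_of_nonneg_left hsum hNi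
        _ = _ := by ring
    have h4 : 4 * δ⁻¹ * ((1/(N:ℝ)) * ∑ t ∈ Finset.range N,
        ∑ a : Bool, gstar a (Ctx t) * (ups a (Ctx t) - lam a (Ctx t))^2)
        ≤ 4 * δ⁻¹ * ε^2 :=
      mul_le_mul_of_nonneg_left hεbd (by positivity)
    linarith
end

section
/- Let $f(g)(c) = \mathrm{Var}_{Q_0,g_0}(D^*(\bar{Q}_1, g)(C_o(t), O(t)) \mid C_o(t) = c)$, where $D^*(\bar{Q}_1,g)(c,a,y) = \frac{g^*(a\mid c)}{g(a\mid c)}(y - \bar{Q}_1(a,c)) + \sum_{a'} g^*(a'\mid c)\bar{Q}_1(a',c) - \text{const}$. Suppose $g \ge \delta$, $g_{0,t} \ge \delta$, $g^* \le 1$, and $0 \le Y, \bar{Q}_1 \le 1$. Then $\left|E_{h_{0,t}}[f(g)(C_o(t))] - E_{h_{0,t}}[f(g_{0,t})(C_o(t))]\right| \le 4\delta^{-3}\|g - g_{0,t}\|_{1, P_{g^*, h_{0,t}}}$. -/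
open MeasureTheory ProbabilityTheory

lemma stmt10_aux (ν : Measure (Bool × ℝ)) [IsProbabilityMeasure ν]
    (q1 ga gb gs : Bool → ℝ) (δ : ℝ) (hδ : 0 < δ)
    (hga : ∀ a, δ ≤ ga a) (hgb : ∀ a, δ ≤ gb a)
    (hgs0 : ∀ a, 0 ≤ gs a) (hgs1 : ∀ a, gs a ≤ 1)
    (hq : ∀ a, q1 a ∈ Set.Icc (0:ℝ) 1)
    (hY : ∀ᵐ p ∂ν, p.2 ∈ Set.Icc (0:ℝ) 1)
    (hmarg : ∀ a, (ν {p | p.1 = a}).toReal = gb a) :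
    |variance (fun p : Bool × ℝ => gs p.1 / ga p.1 * (p.2 - q1 p.1)) ν -
      variance (fun p : Bool × ℝ => gs p.1 / gb p.1 * (p.2 - q1 p.1)) ν|
      ≤ 4 / δ ^ 3 * ∑ a : Bool, gs a * |ga a - gb a| := by
  set X : Bool × ℝ → ℝ := fun p => gs p.1 / ga p.1 * (p.2 - q1 p.1) with hX
  set X' : Bool × ℝ → ℝ := fun p => gs p.1 / gb p.1 * (p.2 - q1 p.1) with hX'
  have hgapos : ∀ a, 0 < ga a := fun a => lt_of_lt_of_le hδ (hga a)
  have hgbpos : ∀ a, 0 < gb a := fun a => lt_of_lt_of_le hδ (hgb a)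
  have hXm : Measurable X :=
    ((measurable_of_countable (fun a => gs a / ga a)).comp measurable_fst).mul
      (measurable_snd.sub ((measurable_of_countable q1).comp measurable_fst))
  have hX'm : Measurable X' :=
    ((measurable_of_countable (fun a => gs a / gb a)).comp measurable_fst).mul
      (measurable_snd.sub ((measurable_of_countable q1).comp measurable_fst))
  have hyq : ∀ᵐ p ∂ν, |p.2 - q1 p.1| ≤ 1 := by
    filter_upwards [hY] with p hp
    obtain ⟨h1, h2⟩ := hp
    obtain ⟨h3, h4⟩ := hq p.1
    rw [abs_sub_le_iff]; constructor <;> linarith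
  have hcoef : ∀ (G : Bool → ℝ), (∀ a, δ ≤ G a) → ∀ a, |gs a / G a| ≤ 1 / δ := by
    intro G hG a
    rw [abs_of_nonneg (div_nonneg (hgs0 a) (le_of_lt (lt_of_lt_of_le hδ (hG a))))]
    exact div_le_div₀ (by norm_num) (hgs1 a) hδ (hG a)
  have hXb : ∀ᵐ p ∂ν, ‖X p‖ ≤ 1 / δ := by
    filter_upwards [hyq] with p hp
    rw [Real.norm_eq_abs, hX, abs_mul]
    calc |gs p.1 / ga p.1| * |p.2 - q1 p.1| ≤ (1/δ) * 1 :=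
          mul_le_mul (hcoef ga hga p.1) hp (abs_nonneg _) (by positivity)
      _ = 1/δ := mul_one _
  have hX'b : ∀ᵐ p ∂ν, ‖X' p‖ ≤ 1 / δ := by
    filter_upwards [hyq] with p hp
    rw [Real.norm_eq_abs, hX', abs_mul]
    calc |gs p.1 / gb p.1| * |p.2 - q1 p.1| ≤ (1/δ) * 1 :=
          mul_le_mul (hcoef gb hgb p.1) hp (abs_nonneg _) (by positivity)
      _ = 1/δ := mul_one _
  have hX2 : MemLp X 2 ν := MemLp.of_bound hXm.aestronglyMeasurable (1/δ) hXb
  have hX'2 : MemLp X' 2 ν := MemLp.of_bound hX'm.aestronglyMeasurable (1/δ) hX'b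
  have hXi : Integrable X ν := hX2.integrable one_le_two
  have hX'i : Integrable X' ν := hX'2.integrable one_le_two
  set φ : Bool → ℝ := fun a => gs a * |ga a - gb a| / δ ^ 2 with hφ
  have hφ0 : ∀ a, 0 ≤ φ a := fun a =>
    div_nonneg (mul_nonneg (hgs0 a) (abs_nonneg _)) (by positivity)
  have hdiff : ∀ᵐ p ∂ν, |X p - X' p| ≤ φ p.1 := by
    filter_upwards [hyq] with p hp
    have hne1 : ga p.1 ≠ 0 := ne_of_gt (hgapos p.1)
    have hne2 : gb p.1 ≠ 0 := ne_of_gt (hgbpos p.1)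
    have heq : X p - X' p
        = gs p.1 * (p.2 - q1 p.1) * ((gb p.1 - ga p.1) / (ga p.1 * gb p.1)) := by
      rw [hX, hX']; field_simp
    rw [heq, abs_mul, abs_mul, abs_div, abs_of_nonneg (hgs0 p.1),
      abs_of_pos (mul_pos (hgapos p.1) (hgbpos p.1)), abs_sub_comm (gb p.1) (ga p.1)]
    calc gs p.1 * |p.2 - q1 p.1| * (|ga p.1 - gb p.1| / (ga p.1 * gb p.1))
        ≤ gs p.1 * 1 * (|ga p.1 - gb p.1| / (δ * δ)) :=
          mul_le_mul (mul_le_mul_of_nonneg_left hp (hgs0 p.1))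
            (div_le_div_of_nonneg_left (abs_nonneg _) (mul_pos hδ hδ)
              (mul_le_mul (hga p.1) (hgb p.1) hδ.le (hgapos p.1).le))
            (div_nonneg (abs_nonneg _) (mul_pos (hgapos p.1) (hgbpos p.1)).le)
            (mul_nonneg (hgs0 p.1) zero_le_one)
      _ = φ p.1 := by simp only [hφ, mul_one, sq]; ring
  have hφm : Measurable fun p : Bool × ℝ => φ p.1 :=
    (measurable_of_countable φ).comp measurable_fst
  have hφint : Integrable (fun p : Bool × ℝ => φ p.1) ν := by
    apply Integrable.mono' (integrable_const (max (φ true) (φ false)))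
      hφm.aestronglyMeasurable
    refine Filter.Eventually.of_forall fun p => ?_
    rw [Real.norm_eq_abs, abs_of_nonneg (hφ0 _)]
    cases p.1 <;> simp [le_max_left, le_max_right]
  have hgb1 : ∀ a, gb a ≤ 1 := by
    intro a
    rw [← hmarg a]
    exact ENNReal.toReal_le_of_le_ofReal zero_le_one (by simpa using prob_le_one)
  have hI : ∫ p, |X p - X' p| ∂ν ≤ ∑ a : Bool, φ a := by
    have h1 : ∫ p, |X p - X' p| ∂ν ≤ ∫ p, φ p.1 ∂ν :=
      integral_mono_ae (hXi.sub hX'i).abs hφint hdiff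
    haveI : IsProbabilityMeasure (Measure.map Prod.fst ν) :=
      Measure.isProbabilityMeasure_map measurable_fst.aemeasurable
    have h2 : ∫ p, φ p.1 ∂ν = ∑ a : Bool, (Measure.map Prod.fst ν {a}).toReal • φ a := by
      rw [← integral_map measurable_fst.aemeasurable
        (measurable_of_countable φ).stronglyMeasurable.aestronglyMeasurable]
      exact integral_fintype (Integrable.of_finite)
    have h3 : ∀ a, (Measure.map Prod.fst ν {a}).toReal = gb a := by
      intro a
      rw [Measure.map_apply measurable_fst (measurableSet_singleton a)]
      exact hmarg a
    calc ∫ p, |X p - X' p| ∂ν ≤ ∑ a : Bool, (Measure.map Prod.fst ν {a}).toReal • φ a :=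
          h2 ▸ h1
      _ = ∑ a : Bool, gb a * φ a := by simp only [h3, smul_eq_mul]
      _ ≤ ∑ a : Bool, 1 * φ a :=
          Finset.sum_le_sum fun a _ => mul_le_mul_of_nonneg_right (hgb1 a) (hφ0 a)
      _ = ∑ a : Bool, φ a := by simp
  set I : ℝ := ∫ p, |X p - X' p| ∂ν with hIdef
  have hI0 : 0 ≤ I := integral_nonneg fun p => abs_nonneg _
  have absint : ∀ (Z : Bool × ℝ → ℝ), |∫ p, Z p ∂ν| ≤ ∫ p, |Z p| ∂ν := fun Z => by
    simpa [Real.norm_eq_abs] using norm_integral_le_integral_norm (μ := ν) Z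
  have meanb : ∀ (Z : Bool × ℝ → ℝ), Integrable Z ν → (∀ᵐ p ∂ν, ‖Z p‖ ≤ 1/δ) →
      |∫ p, Z p ∂ν| ≤ 1/δ := by
    intro Z hZi hZb
    calc |∫ p, Z p ∂ν| ≤ ∫ p, |Z p| ∂ν := absint Z
      _ ≤ ∫ _p, (1/δ : ℝ) ∂ν := integral_mono_ae hZi.abs (integrable_const _)
          (by filter_upwards [hZb] with p hp; rwa [Real.norm_eq_abs] at hp)
      _ = 1/δ := by simp
  have hIXb := meanb X hXi hXb
  have hIX'b := meanb X' hX'i hX'b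
  -- second moments
  have hsqdiff : ∀ᵐ p ∂ν, |X p ^ 2 - X' p ^ 2| ≤ 2/δ * |X p - X' p| := by
    filter_upwards [hXb, hX'b] with p h1 h2
    have heq : X p ^ 2 - X' p ^ 2 = (X p + X' p) * (X p - X' p) := by ring
    rw [heq, abs_mul]
    apply mul_le_mul_of_nonneg_right _ (abs_nonneg _)
    calc |X p + X' p| ≤ |X p| + |X' p| := abs_add_le _ _
      _ ≤ 1/δ + 1/δ := by
          rw [Real.norm_eq_abs] at h1 h2; exact add_le_add h1 h2
      _ = 2/δ := by ring
  have hA : |∫ p, X p ^ 2 ∂ν - ∫ p, X' p ^ 2 ∂ν| ≤ 2/δ * I := by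
    rw [← integral_sub hX2.integrable_sq hX'2.integrable_sq]
    calc |∫ p, (X p ^ 2 - X' p ^ 2) ∂ν| ≤ ∫ p, |X p ^ 2 - X' p ^ 2| ∂ν :=
          absint _
      _ ≤ ∫ p, 2/δ * |X p - X' p| ∂ν :=
          integral_mono_ae (hX2.integrable_sq.sub hX'2.integrable_sq).abs
            ((hXi.sub hX'i).abs.const_mul _) hsqdiff
      _ = 2/δ * I := by rw [integral_const_mul]
  have hMd : |∫ p, X p ∂ν - ∫ p, X' p ∂ν| ≤ I := by
    rw [← integral_sub hXi hX'i]
    exact absint _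
  have hB : |(∫ p, X p ∂ν) ^ 2 - (∫ p, X' p ∂ν) ^ 2| ≤ 2/δ * I := by
    have heq : (∫ p, X p ∂ν) ^ 2 - (∫ p, X' p ∂ν) ^ 2
        = ((∫ p, X p ∂ν) + (∫ p, X' p ∂ν)) * ((∫ p, X p ∂ν) - (∫ p, X' p ∂ν)) := by ring
    rw [heq, abs_mul]
    have h1 : |(∫ p, X p ∂ν) + (∫ p, X' p ∂ν)| ≤ 2/δ := by
      calc |(∫ p, X p ∂ν) + (∫ p, X' p ∂ν)| ≤ |∫ p, X p ∂ν| + |∫ p, X' p ∂ν| := abs_add_le _ _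
        _ ≤ 1/δ + 1/δ := add_le_add hIXb hIX'b
        _ = 2/δ := by ring
    exact mul_le_mul h1 hMd (abs_nonneg _) (by positivity)
  rw [variance_eq_sub hX2, variance_eq_sub hX'2]
  simp only [Pi.pow_apply]
  have key : (∫ p, X p ^ 2 ∂ν - (∫ p, X p ∂ν) ^ 2) - (∫ p, X' p ^ 2 ∂ν - (∫ p, X' p ∂ν) ^ 2)
      = (∫ p, X p ^ 2 ∂ν - ∫ p, X' p ^ 2 ∂ν)
        - ((∫ p, X p ∂ν) ^ 2 - (∫ p, X' p ∂ν) ^ 2) := by ring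
  have step : |(∫ p, X p ^ 2 ∂ν - (∫ p, X p ∂ν) ^ 2)
      - (∫ p, X' p ^ 2 ∂ν - (∫ p, X' p ∂ν) ^ 2)| ≤ 4/δ * I := by
    rw [key]
    refine (abs_sub _ _).trans ?_
    have h4 : 2/δ * I + 2/δ * I = 4/δ * I := by ring
    linarith [hA, hB]
  have hsum : ∑ a : Bool, φ a = (∑ a : Bool, gs a * |ga a - gb a|) / δ ^ 2 := by
    simp only [hφ]
    rw [← Finset.sum_div]
  have last : 4/δ * I ≤ 4 / δ ^ 3 * ∑ a : Bool, gs a * |ga a - gb a| := by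
    calc 4/δ * I ≤ 4/δ * ∑ a : Bool, φ a := mul_le_mul_of_nonneg_left hI (by positivity)
      _ = 4 / δ ^ 3 * ∑ a : Bool, gs a * |ga a - gb a| := by
          rw [hsum]
          ring
  linarith [step, last]

/-- Lemma 4: the map from the design `g` to the mean (over the context law
`h_{0,t}`) of the conditional variance of the canonical gradient `D*(Q̄₁, g)` is Lipschitz
in `L₁(P_{g*,h_{0,t}})` distance on designs, with constant `4δ⁻³`. Here `ν c` is the
conditional law of `(A(t), Y(t))` given context `c` (with treatment marginal `g_{0,t}(⋅∣c)`
and outcome in `[0,1]`), and the centering constants drop from the variance. -/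
theorem stmt_10 {Cc : Type*} [MeasurableSpace Cc]
    (h : Measure Cc) [IsProbabilityMeasure h]
    (ν : Cc → Measure (Bool × ℝ)) (hprob : ∀ c, IsProbabilityMeasure (ν c))
    (Q1 : Bool → Cc → ℝ) (g g0t gstar : Bool → Cc → ℝ) (δ : ℝ) (hδ : 0 < δ)
    (hg : ∀ a c, δ ≤ g a c) (hg0 : ∀ a c, δ ≤ g0t a c)
    (hgs0 : ∀ a c, 0 ≤ gstar a c) (hgs1 : ∀ a c, gstar a c ≤ 1)
    (hQ1 : ∀ a c, Q1 a c ∈ Set.Icc (0:ℝ) 1)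
    (hY : ∀ c, ∀ᵐ p ∂(ν c), p.2 ∈ Set.Icc (0:ℝ) 1)
    (hmarg : ∀ c a, ((ν c) {p | p.1 = a}).toReal = g0t a c)
    (f : (Bool → Cc → ℝ) → Cc → ℝ)
    (hf : ∀ G c, f G c =
      variance (fun p : Bool × ℝ => gstar p.1 c / G p.1 c * (p.2 - Q1 p.1 c)) (ν c))
    (hint1 : Integrable (f g) h) (hint2 : Integrable (f g0t) h)
    (hint3 : Integrable (fun c => ∑ a : Bool, gstar a c * |g a c - g0t a c|) h) :
    |(∫ c, f g c ∂h) - ∫ c, f g0t c ∂h|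
      ≤ 4 / δ^3 * ∫ c, ∑ a : Bool, gstar a c * |g a c - g0t a c| ∂h := by
  have key : ∀ c, |f g c - f g0t c| ≤ 4 / δ ^ 3 * ∑ a : Bool, gstar a c * |g a c - g0t a c| := by
    intro c
    haveI := hprob c
    rw [hf g c, hf g0t c]
    exact stmt10_aux (ν c) (fun a => Q1 a c) (fun a => g a c) (fun a => g0t a c)
      (fun a => gstar a c) δ hδ (fun a => hg a c) (fun a => hg0 a c) (fun a => hgs0 a c)
      (fun a => hgs1 a c) (fun a => hQ1 a c) (hY c) (fun a => hmarg c a)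
  have h1 : |(∫ c, f g c ∂h) - ∫ c, f g0t c ∂h| ≤ ∫ c, |f g c - f g0t c| ∂h := by
    rw [← integral_sub hint1 hint2]
    simpa [Real.norm_eq_abs] using
      norm_integral_le_integral_norm (μ := h) (fun c => f g c - f g0t c)
  have h2 : ∫ c, |f g c - f g0t c| ∂h
      ≤ ∫ c, 4 / δ ^ 3 * ∑ a : Bool, gstar a c * |g a c - g0t a c| ∂h :=
    integral_mono_ae ((hint1.sub hint2).abs) (hint3.const_mul _)
      (Filter.Eventually.of_forall key)
  rw [integral_const_mul] at h2
  linarith [h1, h2]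
end
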